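/- arXiv:2603.05643 — 4 statements merged into one kernel-verified Lean document; each statement's English description precedes it below -/
import Mathlib

section
/- Let N ≥ 1 and let H be an N×N Hermitian complex matrix with spectral decomposition H = Σ_{k=1}^{K} λ_k P_k, where λ_1, …, λ_K are the distinct (real) eigenvalues of H and P_1, …, P_K are the orthogonal projections onto the corresponding eigenspaces (so P_k P_l = 0 for k ≠ l and Σ_k P_k = I). Then for all indices i, j, the time-averaged transition probability converges: (1/T) ∫_0^T |(exp(−itH))_{ij}|² dt tends, as T → ∞, to Σ_{k=1}^{K} |(P_k)_{ij}|². -/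
open Filter intervalIntegral

private lemma exp_sum_smul {N K : ℕ} {P : Fin K → Matrix (Fin N) (Fin N) ℂ}
    (hIdem : ∀ k, P k * P k = P k) (hOrth : ∀ k l, k ≠ l → P k * P l = 0)
    (hSum : ∑ k, P k = 1) (c : Fin K → ℂ) :
    NormedSpace.exp (∑ k, c k • P k) = ∑ k, Complex.exp (c k) • P k := by
  letI : SeminormedRing (Matrix (Fin N) (Fin N) ℂ) := Matrix.linftyOpSemiNormedRing
  letI : NormedRing (Matrix (Fin N) (Fin N) ℂ) := Matrix.linftyOpNormedRing
  letI : NormedAlgebra ℂ (Matrix (Fin N) (Fin N) ℂ) := Matrix.linftyOpNormedAlgebra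
  let φ : (Fin K → ℂ) →ₐ[ℂ] Matrix (Fin N) (Fin N) ℂ :=
  { toFun := fun c => ∑ k, c k • P k
    map_one' := by simp [hSum]
    map_mul' := fun c d => by
      show (∑ k, (c * d) k • P k) = (∑ k, c k • P k) * (∑ k, d k • P k)
      rw [Finset.sum_mul_sum]
      symm
      refine Finset.sum_congr rfl fun k _ => ?_
      rw [Finset.sum_eq_single k
        (fun l _ hl => by
          rw [smul_mul_assoc, mul_smul_comm, hOrth k l (Ne.symm hl), smul_zero, smul_zero])
        (by simp)]
      rw [smul_mul_assoc, mul_smul_comm, hIdem, smul_smul, Pi.mul_apply]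
    map_zero' := by simp
    map_add' := fun c d => by
      simp [Pi.add_apply, add_smul, Finset.sum_add_distrib]
    commutes' := fun r => by
      show (∑ k, (algebraMap ℂ (Fin K → ℂ) r) k • P k) = _
      simp only [Pi.algebraMap_apply, Algebra.algebraMap_self_apply]
      rw [← Finset.smul_sum, hSum, Algebra.algebraMap_eq_smul_one] }
  have hφc : Continuous φ := φ.toLinearMap.continuous_of_finiteDimensional
  have h := NormedSpace.map_exp φ hφc c
  have hpi : NormedSpace.exp c = fun k => Complex.exp (c k) := by
    rw [Pi.exp_def]
    funext k
    rw [Complex.exp_eq_exp_ℂ]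
  calc NormedSpace.exp (∑ k, c k • P k) = NormedSpace.exp (φ c) := rfl
    _ = φ (NormedSpace.exp c) := h.symm
    _ = ∑ k, Complex.exp (c k) • P k := by rw [hpi]; rfl

private lemma avg_exp_tendsto (μ : ℂ) (hre : μ.re = 0) :
    Tendsto (fun T : ℝ => (1/(T:ℂ)) * ∫ t in (0:ℝ)..T, Complex.exp (μ * t)) atTop
      (nhds (if μ = 0 then 1 else 0)) := by
  rcases eq_or_ne μ 0 with h | h
  · subst h
    rw [if_pos rfl]
    apply Tendsto.congr' (f₁ := fun _ : ℝ => (1:ℂ)) _ tendsto_const_nhds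
    filter_upwards [eventually_gt_atTop (0:ℝ)] with T hT
    simp only [zero_mul, Complex.exp_zero, intervalIntegral.integral_const, sub_zero,
      Complex.real_smul, mul_one]
    rw [one_div, inv_mul_cancel₀ (by exact_mod_cast hT.ne')]
  · rw [if_neg h]
    refine squeeze_zero_norm' ?_
      (by simpa [one_div] using tendsto_inv_atTop_zero.mul_const (2/‖μ‖))
    filter_upwards [eventually_ge_atTop (1:ℝ)] with T hT
    have hT0 : (0:ℝ) < T := lt_of_lt_of_le one_pos hT
    rw [integral_exp_mul_complex h]
    have h2 : ‖Complex.exp (μ * ((T:ℝ):ℂ)) - Complex.exp (μ * ((0:ℝ):ℂ))‖ ≤ 2 := by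
      refine (norm_sub_le _ _).trans ?_
      have e1 : ‖Complex.exp (μ * T)‖ = 1 := by
        rw [Complex.norm_exp]
        simp [Complex.mul_re, hre]
      have e2 : ‖Complex.exp (μ * ((0:ℝ):ℂ))‖ = 1 := by simp
      rw [e1, e2]; norm_num
    rw [norm_mul, norm_div, norm_div, norm_one, Complex.norm_real,
      Real.norm_of_nonneg hT0.le, one_div]
    gcongr

/-- **Long-time averaged transition probability.**
Let `H` be an `N × N` Hermitian complex matrix with spectral decomposition
`H = ∑ k, lam k • P k`, where the `lam k` are the distinct real eigenvalues and the
`P k` are the orthogonal projections onto the corresponding eigenspaces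
(`P k * P l = 0` for `k ≠ l`, `∑ k, P k = 1`).  Then for all indices `i j`, the
time-averaged transition probability `(1/T) ∫_0^T |(exp(-itH))_{ij}|² dt` tends, as
`T → ∞`, to `∑ k, |(P k)_{ij}|²`. -/
theorem long_time_average_transition_probability
    (N : ℕ) (hN : 1 ≤ N) (H : Matrix (Fin N) (Fin N) ℂ) (hH : H.IsHermitian)
    (K : ℕ) (lam : Fin K → ℝ) (hdistinct : Function.Injective lam)
    (P : Fin K → Matrix (Fin N) (Fin N) ℂ)
    (hHerm : ∀ k, (P k).IsHermitian)
    (hIdem : ∀ k, P k * P k = P k)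
    (hOrth : ∀ k l, k ≠ l → P k * P l = 0)
    (hSum : ∑ k, P k = 1)
    (hSpec : H = ∑ k, (lam k : ℂ) • P k)
    (i j : Fin N) :
    Filter.Tendsto
      (fun T : ℝ => (1 / T) * ∫ t in (0:ℝ)..T,
        ‖(NormedSpace.exp ((-(Complex.I * (t : ℂ))) • H)) i j‖ ^ 2)
      Filter.atTop
      (nhds (∑ k, ‖P k i j‖ ^ 2)) := by
  classical
  set a : Fin K → ℂ := fun k => P k i j with ha
  have hexp : ∀ t : ℝ, NormedSpace.exp ((-(Complex.I * (t:ℂ))) • H)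
      = ∑ k, Complex.exp ((-(Complex.I * (t:ℂ))) * (lam k : ℂ)) • P k := by
    intro t
    rw [hSpec, Finset.smul_sum]
    simp only [smul_smul]
    exact exp_sum_smul hIdem hOrth hSum _
  have hentry : ∀ t : ℝ, (NormedSpace.exp ((-(Complex.I * (t:ℂ))) • H)) i j
      = ∑ k, Complex.exp ((-(Complex.I * (t:ℂ))) * (lam k : ℂ)) * a k := by
    intro t
    rw [hexp t, Matrix.sum_apply]
    exact Finset.sum_congr rfl fun k _ => by rw [Matrix.smul_apply, smul_eq_mul]
  set μ : Fin K → Fin K → ℂ := fun k l => Complex.I * ((lam l : ℂ) - (lam k : ℂ)) with hμdef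
  set g : ℝ → ℂ := fun t => ∑ k, ∑ l,
    (a k * (starRingEnd ℂ) (a l)) * Complex.exp (μ k l * t) with hgdef
  have hterm : ∀ (t : ℝ) (k l : Fin K),
      (Complex.exp ((-(Complex.I * (t:ℂ))) * (lam k : ℂ)) * a k) *
        (starRingEnd ℂ) (Complex.exp ((-(Complex.I * (t:ℂ))) * (lam l : ℂ)) * a l)
      = (a k * (starRingEnd ℂ) (a l)) * Complex.exp (μ k l * t) := by
    intro t k l
    have hc : (starRingEnd ℂ) (Complex.exp ((-(Complex.I * (t:ℂ))) * (lam l : ℂ)))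
        = Complex.exp (Complex.I * (t:ℂ) * (lam l : ℂ)) := by
      rw [← Complex.exp_conj]
      congr 1
      simp [map_mul, Complex.conj_I, Complex.conj_ofReal]
    rw [map_mul, hc,
      show μ k l * t = (-(Complex.I * (t:ℂ))) * (lam k : ℂ) + Complex.I * (t:ℂ) * (lam l : ℂ) by
        rw [hμdef]; ring,
      Complex.exp_add]
    ring
  have hg : ∀ t : ℝ,
      ‖(NormedSpace.exp ((-(Complex.I * (t:ℂ))) • H)) i j‖ ^ 2 = (g t).re := by
    intro t
    have h1 : (NormedSpace.exp ((-(Complex.I * (t:ℂ))) • H)) i j *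
        (starRingEnd ℂ) ((NormedSpace.exp ((-(Complex.I * (t:ℂ))) • H)) i j) = g t := by
      rw [hentry t, map_sum, Finset.sum_mul_sum, hgdef]
      exact Finset.sum_congr rfl fun k _ => Finset.sum_congr rfl fun l _ => hterm t k l
    rw [← h1, Complex.mul_conj, Complex.ofReal_re, Complex.sq_norm]
  have hcont : ∀ k l, Continuous
      (fun t : ℝ => (a k * (starRingEnd ℂ) (a l)) * Complex.exp (μ k l * t)) := fun k l =>
    continuous_const.mul (Complex.continuous_exp.comp (continuous_const.mul Complex.continuous_ofReal))
  have hgcont : Continuous g :=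
    continuous_finset_sum _ fun k _ => continuous_finset_sum _ fun l _ => hcont k l
  have hFre : ∀ T : ℝ, (1/T) * (∫ t in (0:ℝ)..T,
      ‖(NormedSpace.exp ((-(Complex.I * (t:ℂ))) • H)) i j‖ ^ 2)
      = ((1/(T:ℂ)) * ∫ t in (0:ℝ)..T, g t).re := by
    intro T
    have hInt : IntervalIntegrable g MeasureTheory.volume 0 T := hgcont.intervalIntegrable 0 T
    have hre := Complex.reCLM.intervalIntegral_comp_comm hInt (a := 0) (b := T)
    simp only [Complex.reCLM_apply] at hre
    simp_rw [hg]
    rw [hre, show (1/(T:ℂ)) = ((1/T : ℝ) : ℂ) by push_cast; ring, Complex.re_ofReal_mul]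
  have hlim : ∀ k l, Tendsto (fun T : ℝ => (a k * (starRingEnd ℂ) (a l)) *
        ((1/(T:ℂ)) * ∫ t in (0:ℝ)..T, Complex.exp (μ k l * t))) atTop
      (nhds ((a k * (starRingEnd ℂ) (a l)) * (if μ k l = 0 then 1 else 0))) := fun k l =>
    (avg_exp_tendsto (μ k l) (by
      simp [hμdef, Complex.mul_re])).const_mul _
  have hsplit : ∀ T : ℝ, (1/(T:ℂ)) * ∫ t in (0:ℝ)..T, g t
      = ∑ k, ∑ l, (a k * (starRingEnd ℂ) (a l)) *
          ((1/(T:ℂ)) * ∫ t in (0:ℝ)..T, Complex.exp (μ k l * t)) := by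
    intro T
    simp only [hgdef]
    rw [intervalIntegral.integral_finset_sum fun k _ =>
      ((continuous_finset_sum _ fun l _ => hcont k l).intervalIntegrable 0 T)]
    rw [Finset.mul_sum]
    refine Finset.sum_congr rfl fun k _ => ?_
    rw [intervalIntegral.integral_finset_sum fun l _ => (hcont k l).intervalIntegrable 0 T]
    rw [Finset.mul_sum]
    refine Finset.sum_congr rfl fun l _ => ?_
    rw [intervalIntegral.integral_const_mul]
    ring
  have hval : ∑ k, ∑ l, (a k * (starRingEnd ℂ) (a l)) * (if μ k l = 0 then 1 else 0)
      = ∑ k, a k * (starRingEnd ℂ) (a k) := by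
    refine Finset.sum_congr rfl fun k _ => ?_
    rw [Finset.sum_eq_single k
      (fun l _ hlk => by
        rw [if_neg, mul_zero]
        simp only [hμdef, mul_eq_zero, Complex.I_ne_zero, false_or, sub_eq_zero]
        exact fun hc => hlk (hdistinct (by exact_mod_cast hc)))
      (by simp)]
    rw [if_pos (by simp [hμdef]), mul_one]
  have hC : Tendsto (fun T : ℝ => (1/(T:ℂ)) * ∫ t in (0:ℝ)..T, g t) atTop
      (nhds (∑ k, a k * (starRingEnd ℂ) (a k))) := by
    rw [← hval]
    exact Tendsto.congr (fun T => (hsplit T).symm)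
      (tendsto_finset_sum _ fun k _ => tendsto_finset_sum _ fun l _ => hlim k l)
  have hfinal : Tendsto (fun T : ℝ => ((1/(T:ℂ)) * ∫ t in (0:ℝ)..T, g t).re) atTop
      (nhds ((∑ k, a k * (starRingEnd ℂ) (a k)).re)) :=
    (Complex.continuous_re.tendsto _).comp hC
  have hreval : (∑ k, a k * (starRingEnd ℂ) (a k)).re = ∑ k, ‖P k i j‖ ^ 2 := by
    rw [Complex.re_sum]
    exact Finset.sum_congr rfl fun k _ => by
      rw [Complex.mul_conj, Complex.ofReal_re, Complex.sq_norm]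
  rw [← hreval]
  exact hfinal.congr (fun T => (hFre T).symm)
end

section
/- Let n ≥ 3 and 1 ≤ k ≤ n−2. Define d ∈ ℝ^{2n} by d_i = 1/√(k(k+1)) for 1 ≤ i ≤ k, d_{k+1} = −k/√(k(k+1)), and d_i = 0 for i > k+1. Then d is a unit vector and M̃ d = −(1/(n−1)) d, where M̃ is the normalized adjacency matrix of the barbell graph B(n). -/
/-- Adjacency matrix of the barbell graph `B(n)`: vertices `0,…,n-1` form a complete
graph (clique `A`), vertices `n,…,2n-1` form a complete graph (clique `B`), and there is
a single bridge edge joining vertex `n-1` to vertex `n`. -/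
def barbellAdj (n : ℕ) : Matrix (Fin (2 * n)) (Fin (2 * n)) ℝ := fun i j =>
  if i = j then 0
  else if (i.val < n ∧ j.val < n) ∨ (n ≤ i.val ∧ n ≤ j.val) then 1
  else if (i.val = n - 1 ∧ j.val = n) ∨ (i.val = n ∧ j.val = n - 1) then 1
  else 0

/-- Degrees of the barbell graph: the two bridge vertices have degree `n`, all other
vertices have degree `n - 1`. -/
def barbellDeg (n : ℕ) (i : Fin (2 * n)) : ℝ :=
  if i.val = n - 1 ∨ i.val = n then (n : ℝ) else (n : ℝ) - 1

/-- Normalized adjacency matrix `M̃ = Γ^{-1/2} M Γ^{-1/2}` of the barbell graph,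
with entries `M_{ij} / √(d_i d_j)`. -/
noncomputable def barbellNormAdj (n : ℕ) : Matrix (Fin (2 * n)) (Fin (2 * n)) ℝ := fun i j =>
  barbellAdj n i j / (Real.sqrt (barbellDeg n i) * Real.sqrt (barbellDeg n j))

/-- **Clique-localized degenerate eigenvectors of the barbell graph.**
For `n ≥ 3` and `1 ≤ k ≤ n-2`, the vector with coordinates `1/√(k(k+1))` on the first
`k` vertices of clique `A`, `-k/√(k(k+1))` on vertex `k+1`, and `0` elsewhere, is a unit
vector and an eigenvector of the normalized adjacency matrix of `B(n)` with eigenvalue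
`-1/(n-1)`. -/
theorem barbell_clique_localized_eigenvector
    (n k : ℕ) (hn : 3 ≤ n) (hk1 : 1 ≤ k) (hk2 : k ≤ n - 2)
    (d : Fin (2 * n) → ℝ)
    (hd : ∀ i : Fin (2 * n),
      d i = if i.val < k then 1 / Real.sqrt ((k : ℝ) * ((k : ℝ) + 1))
            else if i.val = k then -(k : ℝ) / Real.sqrt ((k : ℝ) * ((k : ℝ) + 1))
            else 0) :
    (∑ i, d i ^ 2 = 1) ∧
    (barbellNormAdj n).mulVec d = (-(1 / ((n : ℝ) - 1))) • d := by
  have hkn : k + 1 < n := by omega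
  have hk0 : (1:ℝ) ≤ (k:ℝ) := by exact_mod_cast hk1
  have hn3 : (3:ℝ) ≤ (n:ℝ) := by exact_mod_cast hn
  set c := Real.sqrt ((k : ℝ) * ((k : ℝ) + 1)) with hcdef
  have hccpos : (0:ℝ) < (k : ℝ) * ((k : ℝ) + 1) := by nlinarith
  have hcc : c * c = (k : ℝ) * ((k : ℝ) + 1) := Real.mul_self_sqrt (le_of_lt hccpos)
  have hcpos : 0 < c := Real.sqrt_pos.mpr hccpos
  have hcne : c ≠ 0 := ne_of_gt hcpos
  set v : ℕ → ℝ := fun m => if m < k then 1 / c else if m = k then -(k:ℝ) / c else 0 with hvdef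
  have hvsum : ∑ m ∈ Finset.range (k + 1), v m = 0 := by
    rw [Finset.sum_range_succ]
    have h1 : ∑ m ∈ Finset.range k, v m = (k : ℝ) * (1 / c) := by
      rw [Finset.sum_congr rfl (fun m hm => by
        simp only [hvdef]
        rw [if_pos (Finset.mem_range.mp hm)])]
      simp [Finset.sum_const, nsmul_eq_mul]
    rw [h1]
    simp only [hvdef, if_neg (lt_irrefl k), if_pos rfl]
    field_simp
    rw [if_pos trivial]
    have hck : c * (-((k : ℝ) / c)) = -(k : ℝ) := by field_simp
    rw [hck]; ring
  constructor
  · have h1 : ∑ i, d i ^ 2 = ∑ m ∈ Finset.range (2 * n), v m ^ 2 := by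
      rw [← Fin.sum_univ_eq_sum_range (fun m => v m ^ 2) (2 * n)]
      exact Finset.sum_congr rfl fun i _ => by rw [hd]
    rw [h1]
    rw [← Finset.sum_subset (Finset.range_subset_range.mpr (by omega : k + 1 ≤ 2 * n))
        (fun m _ hm => by
          have h : ¬ m < k ∧ m ≠ k := by
            simp only [Finset.mem_range] at hm; omega
          simp [hvdef, h.1, h.2])]
    rw [Finset.sum_range_succ]
    have h2 : ∑ m ∈ Finset.range k, v m ^ 2 = (k : ℝ) * (1 / c) ^ 2 := by
      rw [Finset.sum_congr rfl (fun m hm => by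
        simp only [hvdef]
        rw [if_pos (Finset.mem_range.mp hm)])]
      simp [Finset.sum_const, nsmul_eq_mul]
    rw [h2]
    simp only [hvdef, if_neg (lt_irrefl k), if_pos rfl]
    field_simp
    rw [if_pos trivial]
    have hck2 : c ^ 2 * (-((k : ℝ) / c)) ^ 2 = (k : ℝ) ^ 2 := by field_simp
    rw [hck2]
    nlinarith [hcc]
  · funext i
    have hsmul : ((-(1 / ((n : ℝ) - 1))) • d) i = -(1 / ((n : ℝ) - 1)) * d i := rfl
    rw [hsmul]
    show ∑ j, barbellNormAdj n i j * d j = -(1 / ((n : ℝ) - 1)) * d i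
    set s := Real.sqrt ((n : ℝ) - 1) with hsdef
    have hss : s * s = (n : ℝ) - 1 := Real.mul_self_sqrt (by linarith)
    set Di := Real.sqrt (barbellDeg n i) with hDidef
    set g : ℕ → ℝ := fun m =>
      (if i.val = m then 0
        else if (i.val < n ∧ m < n) ∨ (n ≤ i.val ∧ n ≤ m) then 1
        else if (i.val = n - 1 ∧ m = n) ∨ (i.val = n ∧ m = n - 1) then 1
        else 0) /
        (Di * Real.sqrt (if m = n - 1 ∨ m = n then (n : ℝ) else (n : ℝ) - 1)) * v m
      with hgdef
    have hterm : ∀ j : Fin (2 * n), barbellNormAdj n i j * d j = g j.val := by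
      intro j
      simp only [hgdef, barbellNormAdj, barbellAdj, hd, Fin.ext_iff, hvdef, hDidef, barbellDeg]
    have h1 : ∑ j, barbellNormAdj n i j * d j = ∑ m ∈ Finset.range (2 * n), g m := by
      rw [← Fin.sum_univ_eq_sum_range g (2 * n)]
      exact Finset.sum_congr rfl fun j _ => hterm j
    rw [h1]
    rw [← Finset.sum_subset (Finset.range_subset_range.mpr (by omega : k + 1 ≤ 2 * n))
        (fun m _ hm => by
          have h : ¬ m < k ∧ m ≠ k := by
            simp only [Finset.mem_range] at hm; omega
          simp [hgdef, hvdef, h.1, h.2])]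
    rcases lt_or_ge i.val n with hi | hi
    · -- i in clique A
      have hstep : ∀ m ∈ Finset.range (k + 1), g m =
          v m / (Di * s) - (if i.val = m then v m / (Di * s) else 0) := by
        intro m hm
        have hmk : m ≤ k := by simpa [Nat.lt_succ_iff] using Finset.mem_range.mp hm
        have hmdeg : ¬ (m = n - 1 ∨ m = n) := by omega
        have hmn : m < n := by omega
        simp only [hgdef, if_neg hmdeg, ← hsdef]
        by_cases hij : i.val = m
        · simp [hij]
        · rw [if_neg hij, if_pos (Or.inl ⟨hi, hmn⟩), if_neg hij, sub_zero]
          ring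
      rw [Finset.sum_congr rfl hstep, Finset.sum_sub_distrib, Finset.sum_ite_eq,
        ← Finset.sum_div, hvsum]
      simp only [zero_div, Finset.mem_range, Nat.lt_succ_iff, zero_sub]
      rw [hd]
      simp only [hvdef]
      by_cases hik : i.val ≤ k
      · have hdeg : barbellDeg n i = (n : ℝ) - 1 := by
          simp only [barbellDeg]
          rw [if_neg (by omega)]
        have hDs : Di = s := by rw [hDidef, hsdef, hdeg]
        rw [if_pos hik, hDs]
        rcases lt_or_eq_of_le hik with h | h
        · rw [if_pos h, hss]
          ring
        · rw [if_neg (by omega : ¬ i.val < k), if_pos h, hss]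
          ring
      · rw [if_neg hik, if_neg (by omega : ¬ i.val < k), if_neg (by omega : ¬ i.val = k)]
        simp
    · -- i in clique B : everything vanishes
      rw [Finset.sum_eq_zero, hd, if_neg (by omega), if_neg (by omega), mul_zero]
      intro m hm
      have hmk : m ≤ k := by
        have := Finset.mem_range.mp hm; omega
      simp only [hgdef]
      rw [if_neg (by omega : ¬ i.val = m)]
      rw [if_neg (by omega : ¬ ((i.val < n ∧ m < n) ∨ (n ≤ i.val ∧ n ≤ m)))]
      rw [if_neg (by omega : ¬ ((i.val = n - 1 ∧ m = n) ∨ (i.val = n ∧ m = n - 1)))]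
      simp
end

section
/- Let n ≥ 2, let λ ∈ ℝ, and set a = (λ(n−1) − (n−2))·√((n−1)/n). Define y ∈ ℝ^{2n} by y_i = √(n−1) for 1 ≤ i ≤ n−1, y_n = a√n, y_{n+1} = −a√n, and y_i = −√(n−1) for n+2 ≤ i ≤ 2n. Then M y = λ Γ y holds if and only if n(n−1)λ² − (n² − 3n + 1)λ − (2n − 3) = 0, where M and Γ are the adjacency and degree matrices of the barbell graph B(n). -/
lemma barbell_sum_ite_val {N : ℕ} {c : ℕ} (h : c < N) (v : ℝ) :
    ∑ j : Fin N, (if (j : ℕ) = c then v else 0) = v := by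
  rw [Finset.sum_eq_single (⟨c, h⟩ : Fin N)]
  · simp
  · intro b _ hb
    rw [if_neg]
    exact fun hc => hb (Fin.ext hc)
  · exact fun h' => absurd (Finset.mem_univ _) h'

lemma barbell_TA (m : ℕ) (s t : ℝ) (y : Fin (2 * (m + 2)) → ℝ)
    (hy : ∀ j : Fin (2 * (m + 2)), y j =
      if (j : ℕ) < m + 1 then s else if (j : ℕ) = m + 1 then t
      else if (j : ℕ) = m + 2 then -t else -s) :
    ∑ j : Fin (2 * (m + 2)), (if (j : ℕ) < m + 2 then y j else 0)
      = ((m : ℝ) + 1) * s + t := by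
  simp only [hy]
  rw [Fin.sum_univ_eq_sum_range (fun k => if k < m + 2 then
      (if k < m + 1 then s else if k = m + 1 then t else if k = m + 2 then -t else -s)
      else 0)]
  rw [← Finset.sum_subset (Finset.range_subset_range.mpr (by omega : m + 2 ≤ 2 * (m + 2)))
      (fun x _ hx => by
        rw [if_neg]
        simpa using hx)]
  rw [Finset.sum_range_succ]
  have h1 : ∑ k ∈ Finset.range (m + 1), (if k < m + 2 then
      (if k < m + 1 then s else if k = m + 1 then t else if k = m + 2 then -t else -s)
      else 0) = ∑ _k ∈ Finset.range (m + 1), s := by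
    refine Finset.sum_congr rfl (fun k hk => ?_)
    rw [Finset.mem_range] at hk
    rw [if_pos (by omega), if_pos hk]
  rw [h1, Finset.sum_const, Finset.card_range, nsmul_eq_mul]
  have h2 : (if m + 1 < m + 2 then
      (if m + 1 < m + 1 then s else if m + 1 = m + 1 then t else if m + 1 = m + 2 then -t else -s)
      else 0) = t := by
    rw [if_pos (by omega), if_neg (by omega), if_pos rfl]
  rw [h2]
  push_cast
  ring

lemma barbell_TB (m : ℕ) (s t : ℝ) (y : Fin (2 * (m + 2)) → ℝ)
    (hy : ∀ j : Fin (2 * (m + 2)), y j =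
      if (j : ℕ) < m + 1 then s else if (j : ℕ) = m + 1 then t
      else if (j : ℕ) = m + 2 then -t else -s) :
    ∑ j : Fin (2 * (m + 2)), (if m + 2 ≤ (j : ℕ) then y j else 0)
      = -t - ((m : ℝ) + 1) * s := by
  simp only [hy]
  rw [Fin.sum_univ_eq_sum_range (fun k => if m + 2 ≤ k then
      (if k < m + 1 then s else if k = m + 1 then t else if k = m + 2 then -t else -s)
      else 0)]
  rw [Finset.range_eq_Ico, ← Finset.sum_Ico_consecutive _ (Nat.zero_le (m + 2))
      (by omega : m + 2 ≤ 2 * (m + 2))]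
  rw [Finset.sum_eq_zero (fun x hx => by
    rw [Finset.mem_Ico] at hx
    rw [if_neg (by omega)])]
  rw [Finset.sum_eq_sum_Ico_succ_bot (by omega : m + 2 < 2 * (m + 2))]
  have h1 : ∑ k ∈ Finset.Ico (m + 3) (2 * (m + 2)), (if m + 2 ≤ k then
      (if k < m + 1 then s else if k = m + 1 then t else if k = m + 2 then -t else -s)
      else 0) = ∑ _k ∈ Finset.Ico (m + 3) (2 * (m + 2)), -s := by
    refine Finset.sum_congr rfl (fun k hk => ?_)
    rw [Finset.mem_Ico] at hk
    rw [if_pos (by omega), if_neg (by omega), if_neg (by omega), if_neg (by omega)]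
  rw [h1, Finset.sum_const, Nat.card_Ico, nsmul_eq_mul]
  have h2 : (if m + 2 ≤ m + 2 then
      (if m + 2 < m + 1 then s else if m + 2 = m + 1 then t else if m + 2 = m + 2 then -t else -s)
      else 0) = -t := by
    rw [if_pos le_rfl, if_neg (by omega), if_neg (by omega), if_pos rfl]
  rw [h2]
  have h3 : 2 * (m + 2) - (m + 3) = m + 1 := by omega
  rw [h3]
  push_cast
  ring

lemma barbell_mulVec (m : ℕ) (s t : ℝ) (y : Fin (2 * (m + 2)) → ℝ)
    (hy : ∀ j : Fin (2 * (m + 2)), y j =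
      if (j : ℕ) < m + 1 then s else if (j : ℕ) = m + 1 then t
      else if (j : ℕ) = m + 2 then -t else -s)
    (i : Fin (2 * (m + 2))) :
    (barbellAdj (m + 2)).mulVec y i =
      if (i : ℕ) < m + 1 then (m : ℝ) * s + t
      else if (i : ℕ) = m + 1 then ((m : ℝ) + 1) * s - t
      else if (i : ℕ) = m + 2 then t - ((m : ℝ) + 1) * s
      else -((m : ℝ) * s + t) := by
  simp only [Matrix.mulVec, dotProduct]
  rcases lt_or_ge (i : ℕ) (m + 1) with hi | hi
  · rw [if_pos hi]
    have key : ∀ j : Fin (2 * (m + 2)), barbellAdj (m + 2) i j * y j =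
        (if (j : ℕ) < m + 2 then y j else 0) - (if (j : ℕ) = (i : ℕ) then s else 0) := by
      intro j
      rw [hy j]
      simp only [barbellAdj, Fin.ext_iff]
      split_ifs <;> first | ring1 | omega | (exfalso; omega)
    simp only [key]
    rw [Finset.sum_sub_distrib, barbell_TA m s t y hy, barbell_sum_ite_val (by omega) s]
    ring
  rcases eq_or_lt_of_le hi with hi2 | hi2
  · rw [if_neg (by omega), if_pos hi2.symm]
    have key : ∀ j : Fin (2 * (m + 2)), barbellAdj (m + 2) i j * y j =
        (if (j : ℕ) < m + 2 then y j else 0) + (if (j : ℕ) = m + 2 then -t else 0)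
          - (if (j : ℕ) = (i : ℕ) then t else 0) := by
      intro j
      rw [hy j]
      simp only [barbellAdj, Fin.ext_iff]
      split_ifs <;> first | ring1 | omega | (exfalso; omega)
    simp only [key]
    rw [Finset.sum_sub_distrib, Finset.sum_add_distrib, barbell_TA m s t y hy,
      barbell_sum_ite_val (by omega) (-t), barbell_sum_ite_val (by omega) t]
    ring
  rcases eq_or_lt_of_le (show m + 2 ≤ (i : ℕ) from hi2) with hi3 | hi3
  · rw [if_neg (by omega), if_neg (by omega), if_pos hi3.symm]
    have key : ∀ j : Fin (2 * (m + 2)), barbellAdj (m + 2) i j * y j =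
        (if m + 2 ≤ (j : ℕ) then y j else 0) + (if (j : ℕ) = m + 1 then t else 0)
          - (if (j : ℕ) = (i : ℕ) then -t else 0) := by
      intro j
      rw [hy j]
      simp only [barbellAdj, Fin.ext_iff]
      split_ifs <;> first | ring1 | omega | (exfalso; omega)
    simp only [key]
    rw [Finset.sum_sub_distrib, Finset.sum_add_distrib, barbell_TB m s t y hy,
      barbell_sum_ite_val (by omega) t, barbell_sum_ite_val (by omega) (-t)]
    ring
  · rw [if_neg (by omega), if_neg (by omega), if_neg (by omega)]
    have key : ∀ j : Fin (2 * (m + 2)), barbellAdj (m + 2) i j * y j =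
        (if m + 2 ≤ (j : ℕ) then y j else 0) - (if (j : ℕ) = (i : ℕ) then -s else 0) := by
      intro j
      rw [hy j]
      simp only [barbellAdj, Fin.ext_iff]
      split_ifs <;> first | ring1 | omega | (exfalso; omega)
    simp only [key]
    rw [Finset.sum_sub_distrib, barbell_TB m s t y hy,
      barbell_sum_ite_val (by omega) (-s)]
    ring

/-- **Antisymmetric bridge modes of the barbell graph.**
For `n ≥ 2`, `λ ∈ ℝ` and `a = (λ(n-1) - (n-2))·√((n-1)/n)`, the vector `y` that equals
`√(n-1)` on the first `n-1` vertices of clique `A`, `a√n` on bridge vertex `n`,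
`-a√n` on bridge vertex `n+1`, and `-√(n-1)` on the remaining vertices of clique `B`,
satisfies the generalized eigenvalue equation `M y = λ Γ y` if and only if
`n(n-1)λ² - (n² - 3n + 1)λ - (2n - 3) = 0`. -/
theorem barbell_antisymmetric_mode_iff_quadratic
    (n : ℕ) (hn : 2 ≤ n) (lam a : ℝ)
    (ha : a = (lam * ((n : ℝ) - 1) - ((n : ℝ) - 2)) * Real.sqrt (((n : ℝ) - 1) / (n : ℝ)))
    (y : Fin (2 * n) → ℝ)
    (hy : ∀ i : Fin (2 * n),
      y i = if i.val < n - 1 then Real.sqrt ((n : ℝ) - 1)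
            else if i.val = n - 1 then a * Real.sqrt (n : ℝ)
            else if i.val = n then -(a * Real.sqrt (n : ℝ))
            else -Real.sqrt ((n : ℝ) - 1)) :
    ((barbellAdj n).mulVec y = fun i => lam * (barbellDeg n i * y i))
      ↔ (n : ℝ) * ((n : ℝ) - 1) * lam ^ 2 - ((n : ℝ) ^ 2 - 3 * (n : ℝ) + 1) * lam
          - (2 * (n : ℝ) - 3) = 0 := by
  obtain ⟨m, rfl⟩ : ∃ m, n = m + 2 := ⟨n - 2, by omega⟩
  clear hn
  set s : ℝ := Real.sqrt (((m + 2 : ℕ) : ℝ) - 1) with hs_def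
  set t : ℝ := a * Real.sqrt ((m + 2 : ℕ) : ℝ) with ht_def
  have hm1 : ((m + 2 : ℕ) : ℝ) - 1 = (m : ℝ) + 1 := by push_cast; ring
  have hm0 : ((m + 2 : ℕ) : ℝ) = (m : ℝ) + 2 := by push_cast; ring
  have hs_pos : 0 < s := by
    rw [hs_def, hm1]
    exact Real.sqrt_pos.mpr (by positivity)
  have hs_ne : s ≠ 0 := ne_of_gt hs_pos
  have ht : t = (lam * ((m : ℝ) + 1) - (m : ℝ)) * s := by
    rw [ht_def, ha, hs_def]
    have hsqrt : Real.sqrt ((((m + 2 : ℕ) : ℝ) - 1) / ((m + 2 : ℕ) : ℝ))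
        * Real.sqrt ((m + 2 : ℕ) : ℝ) = Real.sqrt (((m + 2 : ℕ) : ℝ) - 1) := by
      rw [← Real.sqrt_mul (by rw [hm1, hm0]; positivity)]
      congr 1
      rw [hm1, hm0]
      field_simp
    rw [mul_assoc, hsqrt, hm1, hm0]
    ring_nf
  have hy' : ∀ j : Fin (2 * (m + 2)), y j =
      if (j : ℕ) < m + 1 then s else if (j : ℕ) = m + 1 then t
      else if (j : ℕ) = m + 2 then -t else -s := hy
  have hmv := barbell_mulVec m s t y hy'
  constructor
  · intro h
    have E := congrFun h (⟨m + 1, by omega⟩ : Fin (2 * (m + 2)))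
    rw [hmv] at E
    rw [hy'] at E
    simp only [barbellDeg, Fin.val_mk, show m + 2 - 1 = m + 1 from rfl,
      lt_self_iff_false, if_false, eq_self_iff_true, if_true, true_or] at E
    rw [ht, hm0] at E
    have hX : (((m : ℝ) + 2) * ((m : ℝ) + 1) * lam ^ 2
        - ((m : ℝ) ^ 2 + (m : ℝ) - 1) * lam - (2 * (m : ℝ) + 1)) * s = 0 := by
      linear_combination -E
    rcases mul_eq_zero.mp hX with hX0 | hX0
    · push_cast
      linear_combination hX0
    · exact absurd hX0 hs_ne
  · intro hQ
    push_cast at hQ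
    funext i
    rw [hmv, hy']
    simp only [barbellDeg]
    rw [hm0]
    have hi4 : (i : ℕ) < 2 * (m + 2) := i.isLt
    split_ifs <;>
      first
        | (exfalso; omega)
        | linear_combination ht
        | linear_combination -ht
        | linear_combination (-(1 : ℝ) - lam * ((m : ℝ) + 2)) * ht - s * hQ
        | linear_combination ((1 : ℝ) + lam * ((m : ℝ) + 2)) * ht + s * hQ
end

section
/- Let n ≥ 2, 1 ≤ j ≤ n, and 1 ≤ r ≤ n−1, and let M̃ be the normalized adjacency matrix of the full-connection star-of-cliques graph. Define w ∈ ℝ^{1+n²} by w_{(j,k)} = 1/√(r(r+1)) for 1 ≤ k ≤ r, w_{(j,r+1)} = −r/√(r(r+1)), and all other coordinates 0. Then w is a unit vector and M̃ w = −(1/n) w. -/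
lemma sum_step' (n r : ℕ) (hr : r < n) (b c : ℝ) :
    ∑ k : Fin n, (if (k : ℕ) < r then b else if (k : ℕ) = r then c else 0)
      = r * b + c := by
  rw [Fin.sum_univ_eq_sum_range (fun i => if i < r then b else if i = r then c else 0) n]
  rw [← Finset.sum_subset (Finset.range_subset_range.mpr hr)
    (f := fun i => if i < r then b else if i = r then c else 0)]
  · rw [Finset.sum_range_succ]
    have h1 : ∑ i ∈ Finset.range r, (if i < r then b else if i = r then c else 0)
        = ∑ i ∈ Finset.range r, b := by
      refine Finset.sum_congr rfl fun i hi => ?_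
      simp [Finset.mem_range.mp hi]
    rw [h1]
    simp [Finset.sum_const, nsmul_eq_mul]
  · intro x hx hx'
    have h0 : r + 1 ≤ x := by
      by_contra h
      exact hx' (Finset.mem_range.mpr (by omega))
    have h1 : ¬ x < r := by omega
    have h2 : x ≠ r := by omega
    simp [h1, h2]

noncomputable def fvec (n r : ℕ) : Fin n → ℝ := fun k =>
  if (k : ℕ) < r then 1 / Real.sqrt ((r : ℝ) * ((r : ℝ) + 1))
  else if (k : ℕ) = r then -(r : ℝ) / Real.sqrt ((r : ℝ) * ((r : ℝ) + 1)) else 0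

lemma fvec_sum (n r : ℕ) (hr : r < n) : ∑ k : Fin n, fvec n r k = 0 := by
  unfold fvec
  rw [sum_step' n r hr]
  ring

lemma fvec_sq_sum (n r : ℕ) (hr1 : 1 ≤ r) (hr : r < n) :
    ∑ k : Fin n, (fvec n r k) ^ 2 = 1 := by
  have hrpos : (0 : ℝ) < (r : ℝ) := by exact_mod_cast hr1
  have hprod : (0 : ℝ) < (r : ℝ) * ((r : ℝ) + 1) := by positivity
  have hs2 : Real.sqrt ((r : ℝ) * ((r : ℝ) + 1)) ^ 2 = (r : ℝ) * ((r : ℝ) + 1) :=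
    Real.sq_sqrt hprod.le
  have hs0 : Real.sqrt ((r : ℝ) * ((r : ℝ) + 1)) ≠ 0 := by positivity
  set s := Real.sqrt ((r : ℝ) * ((r : ℝ) + 1)) with hs
  have h1 : ∑ k : Fin n, (fvec n r k) ^ 2 =
      ∑ k : Fin n, (if (k : ℕ) < r then (1 / s) ^ 2
        else if (k : ℕ) = r then (-(r : ℝ) / s) ^ 2 else 0) := by
    refine Finset.sum_congr rfl fun k _ => ?_
    unfold fvec
    split_ifs <;> ring
  rw [h1, sum_step' n r hr]
  have : (r : ℝ) * (1 / s) ^ 2 + (-(r : ℝ) / s) ^ 2 = ((r : ℝ) * ((r : ℝ) + 1)) / s ^ 2 := by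
    field_simp
    ring
  rw [this, hs2, div_self hprod.ne']
/-- Normalized adjacency matrix of the full-connection star-of-cliques graph on the
`1 + n²` vertices `{center} ∪ {(j,k) : j,k ∈ Fin n}` (the center is `none`).  Its
entries are `n^{-3/2} = 1/(n√n)` between the center and any clique vertex, `1/n`
between distinct vertices of the same clique, and `0` otherwise. -/
noncomputable def starFullNormAdj (n : ℕ) :
    Matrix (Option (Fin n × Fin n)) (Option (Fin n × Fin n)) ℝ := fun i j =>
  match i, j with
  | none, none => 0
  | none, some _ => 1 / ((n : ℝ) * Real.sqrt (n : ℝ))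
  | some _, none => 1 / ((n : ℝ) * Real.sqrt (n : ℝ))
  | some (j₁, k₁), some (j₂, k₂) => if j₁ = j₂ ∧ k₁ ≠ k₂ then 1 / (n : ℝ) else 0

/-- **Clique-internal eigenvectors of the full-connection star-of-cliques graph.**
For `n ≥ 2`, a clique index `j` and `1 ≤ r ≤ n-1`, the vector `w` supported on clique
`j`, with coordinates `1/√(r(r+1))` on the first `r` vertices of the clique,
`-r/√(r(r+1))` on the `(r+1)`-st vertex and `0` elsewhere, is a unit vector and an
eigenvector of `M̃` with eigenvalue `-1/n`. -/
theorem starFull_clique_internal_eigenvector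
    (n : ℕ) (hn : 2 ≤ n) (j : Fin n) (r : ℕ) (hr1 : 1 ≤ r) (hr2 : r ≤ n - 1)
    (w : Option (Fin n × Fin n) → ℝ)
    (hw : ∀ v, w v = match v with
      | none => 0
      | some (j', k) =>
          if j' = j then
            (if k.val < r then 1 / Real.sqrt ((r : ℝ) * ((r : ℝ) + 1))
             else if k.val = r then -(r : ℝ) / Real.sqrt ((r : ℝ) * ((r : ℝ) + 1))
             else 0)
          else 0) :
    (∑ v, w v ^ 2 = 1) ∧ (starFullNormAdj n).mulVec w = (-(1 / (n : ℝ))) • w := by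
  have hrn : r < n := by omega
  have hwn : w none = 0 := hw none
  have hws : ∀ j' k : Fin n, w (some (j', k)) = if j' = j then fvec n r k else 0 :=
    fun j' k => hw (some (j', k))
  constructor
  · -- unit norm
    rw [Fintype.sum_option, hwn, Fintype.sum_prod_type]
    have hrow : ∀ j' : Fin n,
        ∑ k : Fin n, w (some (j', k)) ^ 2 = if j' = j then 1 else 0 := by
      intro j'
      by_cases h : j' = j
      · rw [if_pos h, ← fvec_sq_sum n r hr1 hrn]
        exact Finset.sum_congr rfl fun k _ => by rw [hws, if_pos h]
      · rw [if_neg h]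
        exact Finset.sum_eq_zero fun k _ => by rw [hws, if_neg h]; ring
    rw [Finset.sum_congr rfl fun j' _ => hrow j']
    simp
  · -- eigenvector
    funext v
    rw [Matrix.mulVec, dotProduct, Fintype.sum_option, Fintype.sum_prod_type]
    match v with
    | none =>
      have hrow : ∀ j' : Fin n,
          ∑ k : Fin n, starFullNormAdj n none (some (j', k)) * w (some (j', k)) = 0 := by
        intro j'
        by_cases h : j' = j
        · have hterm : ∀ k : Fin n,
              starFullNormAdj n none (some (j', k)) * w (some (j', k))
                = (1 / ((n : ℝ) * Real.sqrt (n : ℝ))) * fvec n r k := by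
            intro k; rw [hws, if_pos h]; rfl
          rw [Finset.sum_congr rfl fun k _ => hterm k, ← Finset.mul_sum,
            fvec_sum n r hrn, mul_zero]
        · exact Finset.sum_eq_zero fun k _ => by rw [hws, if_neg h, mul_zero]
      rw [hwn, mul_zero, zero_add, Finset.sum_congr rfl fun j' _ => hrow j',
        Finset.sum_const_zero, Pi.smul_apply, hwn, smul_zero]
    | some (j₁, k₁) =>
      rw [hwn, mul_zero, zero_add]
      by_cases hj : j₁ = j
      · have hrow : ∀ j₂ : Fin n,
            ∑ k₂ : Fin n, starFullNormAdj n (some (j₁, k₁)) (some (j₂, k₂)) * w (some (j₂, k₂))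
              = if j₂ = j then -(1 / (n : ℝ)) * fvec n r k₁ else 0 := by
          intro j₂
          by_cases h : j₂ = j
          · rw [if_pos h]
            have hj12 : j₁ = j₂ := hj.trans h.symm
            have hterm : ∀ k₂ : Fin n,
                starFullNormAdj n (some (j₁, k₁)) (some (j₂, k₂)) * w (some (j₂, k₂))
                  = (1 / (n : ℝ)) * fvec n r k₂
                    - (if k₂ = k₁ then (1 / (n : ℝ)) * fvec n r k₂ else 0) := by
              intro k₂
              rw [hws, if_pos h]
              show (if j₁ = j₂ ∧ k₁ ≠ k₂ then 1 / (n : ℝ) else 0) * fvec n r k₂ = _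
              by_cases hk : k₂ = k₁
              · have hne : ¬ (j₁ = j₂ ∧ k₁ ≠ k₂) := by
                  rw [hk]; exact fun hc => hc.2 rfl
                rw [if_neg hne, if_pos hk, hk]
                ring
              · rw [if_pos ⟨hj12, fun h' => hk h'.symm⟩, if_neg hk]
                ring
            rw [Finset.sum_congr rfl fun k₂ _ => hterm k₂, Finset.sum_sub_distrib,
              ← Finset.mul_sum, fvec_sum n r hrn, mul_zero,
              Finset.sum_ite_eq' Finset.univ k₁ (fun k₂ => (1 / (n : ℝ)) * fvec n r k₂),
              if_pos (Finset.mem_univ k₁)]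
            try ring
          · rw [if_neg h]
            exact Finset.sum_eq_zero fun k₂ _ => by rw [hws, if_neg h, mul_zero]
        rw [Finset.sum_congr rfl fun j₂ _ => hrow j₂,
          Finset.sum_ite_eq' Finset.univ j (fun _ => -(1 / (n : ℝ)) * fvec n r k₁),
          if_pos (Finset.mem_univ j), Pi.smul_apply, hws, if_pos hj, smul_eq_mul]
        try ring
      · have hrow : ∀ j₂ : Fin n,
            ∑ k₂ : Fin n, starFullNormAdj n (some (j₁, k₁)) (some (j₂, k₂)) * w (some (j₂, k₂))
              = 0 := by
          intro j₂
          refine Finset.sum_eq_zero fun k₂ _ => ?_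
          by_cases h2 : j₂ = j
          · show (if j₁ = j₂ ∧ k₁ ≠ k₂ then 1 / (n : ℝ) else 0) * w (some (j₂, k₂)) = 0
            have hne : ¬ (j₁ = j₂ ∧ k₁ ≠ k₂) := fun hc => hj (hc.1.trans h2)
            rw [if_neg hne, zero_mul]
          · rw [hws, if_neg h2, mul_zero]
        rw [Finset.sum_congr rfl fun j₂ _ => hrow j₂, Finset.sum_const_zero,
          Pi.smul_apply, hws, if_neg hj, smul_zero]
end
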